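/- Let ρ > 0 and M > 0 with M/ρ ≥ e^e, and let A : [0, 1/3] → ℝ be differentiable and nondecreasing with A(0) ≥ ρ and A(1/3) ≤ M/2. Then there exists r ∈ [0, 1/3] such that A'(r) ≤ 3·( ln ln(M/ρ) − ln ln 2 )·A(r)·ln(M / A(r)). -/

import Mathlib

theorem stmt15 (ρ M : ℝ) (hρ : 0 < ρ) (hM : 0 < M)
    (hMρ : Real.exp (Real.exp 1) ≤ M / ρ)
    (A : ℝ → ℝ)
    (hdiff : ∀ r ∈ Set.Icc (0 : ℝ) (1 / 3), DifferentiableAt ℝ A r)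
    (hmono : MonotoneOn A (Set.Icc (0 : ℝ) (1 / 3)))
    (hA0 : ρ ≤ A 0) (hA3 : A (1 / 3) ≤ M / 2) :
    ∃ r ∈ Set.Icc (0 : ℝ) (1 / 3),
      deriv A r ≤ 3 * (Real.log (Real.log (M / ρ)) - Real.log (Real.log 2)) *
        A r * Real.log (M / A r) := by
  have h0mem : (0 : ℝ) ∈ Set.Icc (0 : ℝ) (1 / 3) := by
    constructor <;> norm_num
  have h3mem : (1 / 3 : ℝ) ∈ Set.Icc (0 : ℝ) (1 / 3) := by
    constructor <;> norm_num
  -- basic bounds on A on the interval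
  have hAlb : ∀ x ∈ Set.Icc (0 : ℝ) (1 / 3), ρ ≤ A x := fun x hx =>
    le_trans hA0 (hmono h0mem hx hx.1)
  have hAub : ∀ x ∈ Set.Icc (0 : ℝ) (1 / 3), A x ≤ M / 2 := fun x hx =>
    le_trans (hmono hx h3mem hx.2) hA3
  have hApos : ∀ x ∈ Set.Icc (0 : ℝ) (1 / 3), 0 < A x := fun x hx =>
    lt_of_lt_of_le hρ (hAlb x hx)
  have hlog2pos : (0 : ℝ) < Real.log 2 := Real.log_pos (by norm_num)
  have hLpos : ∀ x ∈ Set.Icc (0 : ℝ) (1 / 3),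
      Real.log 2 ≤ Real.log M - Real.log (A x) := by
    intro x hx
    have h1 : Real.log (A x) ≤ Real.log (M / 2) :=
      Real.log_le_log (hApos x hx) (hAub x hx)
    have h2 : Real.log (M / 2) = Real.log M - Real.log 2 :=
      Real.log_div (ne_of_gt hM) (by norm_num)
    linarith [h1, h2.le]
  set g : ℝ → ℝ := fun r => Real.log (Real.log M - Real.log (A r)) with hg
  set g' : ℝ → ℝ := fun r =>
    -(deriv A r / A r) / (Real.log M - Real.log (A r)) with hg'
  have hcont : ContinuousOn g (Set.Icc (0 : ℝ) (1 / 3)) := by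
    apply ContinuousOn.log
    · exact (continuousOn_const.sub
        (ContinuousOn.log
          (fun x hx => ((hdiff x hx).continuousAt).continuousWithinAt)
          (fun x hx => ne_of_gt (hApos x hx))))
    · intro x hx
      have := hLpos x hx
      linarith
  have hderiv : ∀ x ∈ Set.Ioo (0 : ℝ) (1 / 3), HasDerivAt g (g' x) x := by
    intro x hx
    have hx' : x ∈ Set.Icc (0 : ℝ) (1 / 3) := Set.mem_Icc_of_Ioo hx
    have hA : HasDerivAt A (deriv A x) x := (hdiff x hx').hasDerivAt
    have hlogA : HasDerivAt (fun r => Real.log (A r)) (deriv A x / A x) x :=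
      hA.log (ne_of_gt (hApos x hx'))
    have hL : HasDerivAt (fun r => Real.log M - Real.log (A r))
        (-(deriv A x / A x)) x := by
      exact hlogA.const_sub (Real.log M)
    have hLne : Real.log M - Real.log (A x) ≠ 0 := by
      have := hLpos x hx'; intro h; rw [h] at this; linarith
    exact hL.log hLne
  obtain ⟨r, hr, hreq⟩ := exists_hasDerivAt_eq_slope g g' (by norm_num : (0:ℝ) < 1/3)
    hcont hderiv
  have hrIcc : r ∈ Set.Icc (0 : ℝ) (1 / 3) := Set.mem_Icc_of_Ioo hr
  refine ⟨r, hrIcc, ?_⟩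
  have hArpos := hApos r hrIcc
  have hLr := hLpos r hrIcc
  have hLrpos : 0 < Real.log M - Real.log (A r) := lt_of_lt_of_le hlog2pos hLr
  -- turn the MVT equation into an expression for deriv A r
  have hkey : deriv A r = 3 * (g 0 - g (1 / 3)) *
      (A r * (Real.log M - Real.log (A r))) := by
    have h := hreq
    simp only [hg'] at h
    field_simp at h
    nlinarith [h, hArpos, hLrpos]
  -- bound g 0 and g (1/3)
  have hg0 : g 0 ≤ Real.log (Real.log (M / ρ)) := by
    have h1 : Real.log M - Real.log (A 0) ≤ Real.log M - Real.log ρ := by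
      have := Real.log_le_log hρ hA0; linarith
    have h2 : Real.log (M / ρ) = Real.log M - Real.log ρ :=
      Real.log_div (ne_of_gt hM) (ne_of_gt hρ)
    rw [h2]
    exact Real.log_le_log (lt_of_lt_of_le hlog2pos (hLpos 0 h0mem)) h1
  have hg3 : Real.log (Real.log 2) ≤ g (1 / 3) :=
    Real.log_le_log hlog2pos (hLpos _ h3mem)
  have hCle : g 0 - g (1 / 3) ≤
      Real.log (Real.log (M / ρ)) - Real.log (Real.log 2) := by linarith
  have hrw : Real.log (M / A r) = Real.log M - Real.log (A r) :=
    Real.log_div (ne_of_gt hM) (ne_of_gt hArpos)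
  rw [hrw, hkey]
  have hPnn : 0 ≤ A r * (Real.log M - Real.log (A r)) := by positivity
  nlinarith [mul_le_mul_of_nonneg_right hCle hPnn]
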